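/- There exist infinitely many graphs G that have no {P2,P5}-factor but satisfy c1(G−X) + (2/3)·c3(G−X) ≤ (4/3)·|X| + 2/3 for all X ⊆ V(G). Hence the bound (4/3)|X| + 1/3 in the sufficient condition for a {P2,P5}-factor cannot be relaxed to (4/3)|X| + 2/3. -/

import Mathlib

open SimpleGraph

/-- `cCount H i` is the number of connected components of `H` with exactly `i` vertices. -/
noncomputable def cCount {V : Type*} (H : SimpleGraph V) (i : ℕ) : ℕ :=
  Nat.card {c : H.ConnectedComponent // Nat.card c.supp = i}

/-- The component `c` of `F` is (induces) a path of order `n`. -/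
def IsPathComp {V : Type*} (F : SimpleGraph V) (n : ℕ) (c : F.ConnectedComponent) : Prop :=
  Nonempty ((SimpleGraph.induce c.supp F) ≃g SimpleGraph.pathGraph n)

/-- `G` has a spanning subgraph each of whose components is a path of order in `ns`. -/
def HasPathFamilyFactor {V : Type*} (G : SimpleGraph V) (ns : Set ℕ) : Prop :=
  ∃ F ≤ G, ∀ c : F.ConnectedComponent, ∃ n ∈ ns, IsPathComp F n c

/-- `F` is a path-factor of `G`: a spanning subgraph each of whose components is a
path of order at least `2`. -/
def IsPathFactor {V : Type*} (G F : SimpleGraph V) : Prop :=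
  F ≤ G ∧ ∀ c : F.ConnectedComponent, ∃ n, 2 ≤ n ∧ IsPathComp F n c

/-- The neighbourhood `N_G(X)`: vertices outside `X` adjacent to some vertex of `X`. -/
def nbhd {V : Type*} (G : SimpleGraph V) (X : Set V) : Set V :=
  {v | v ∉ X ∧ ∃ u ∈ X, G.Adj u v}

def Rrel (v w : ℕ) : Prop :=
  (v < 3 ∧ w < 3 ∧ v ≠ w) ∨
    (3 ≤ v ∧ 3 ≤ w ∧ ((w = v + 1 ∧ v % 2 = 1) ∨ (v = w + 1 ∧ w % 2 = 1)))

def pfn (k : ℕ) : ℕ := if k % 2 = 1 then k + 1 else k - 1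

def Gdef (m : ℕ) : SimpleGraph (Fin m) where
  Adj a b := Rrel a.val b.val
  symm := by constructor; intro a b h; unfold Rrel at *; omega
  loopless := by constructor; intro a h; unfold Rrel at h; omega

lemma Rrel_lt3 {a b : ℕ} (h : Rrel a b) (ha : a < 3) : b < 3 := by unfold Rrel at h; omega

lemma Rrel_step {u a b : ℕ} (hu : 3 ≤ u) (ha : a = u ∨ a = pfn u) (h : Rrel a b) :
    b = u ∨ b = pfn u := by
  unfold Rrel pfn at *; split_ifs at * <;> omega

lemma pfn_bounds {k m : ℕ} (h3 : 3 ≤ k) (hm : k < m) (hodd : m % 2 = 1) :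
    3 ≤ pfn k ∧ pfn k < m := by
  unfold pfn; split_ifs <;> omega

lemma Rrel_pfn {k : ℕ} (h3 : 3 ≤ k) : Rrel k (pfn k) := by
  unfold Rrel pfn; split_ifs <;> omega

lemma pfn_inj {k k' : ℕ} (h : 3 ≤ k) (h' : 3 ≤ k') (e : pfn k = pfn k') : k = k' := by
  unfold pfn at e; split_ifs at e <;> omega

lemma reach_ind {V : Type*} {G : SimpleGraph V} {P : V → Prop}
    (hstep : ∀ a b, G.Adj a b → P a → P b) {a b : V} (h : G.Reachable a b) :
    P a → P b := by
  obtain ⟨w⟩ := h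
  induction w with
  | nil => exact id
  | cons h' p ih => exact fun ha => ih (hstep _ _ h' ha)

lemma reach_up {V : Type*} {s : Set V} {G : SimpleGraph V} {a b : ↥s}
    (h : (SimpleGraph.induce s G).Reachable a b) : G.Reachable ↑a ↑b :=
  h.map ⟨Subtype.val, fun {x y} hxy => hxy⟩

lemma isPathComp_card {V : Type*} {F : SimpleGraph V} {n : ℕ} {c : F.ConnectedComponent}
    (h : IsPathComp F n c) : Nat.card c.supp = n := by
  obtain ⟨e⟩ := h
  rw [Nat.card_congr e.toEquiv]
  simp

lemma supp_ncard_eq {V : Type*} {F : SimpleGraph V} (c : F.ConnectedComponent) :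
    Nat.card c.supp = c.supp.ncard := Nat.card_coe_set_eq _

lemma no_factor (m : ℕ) (h3m : 3 ≤ m) : ¬ HasPathFamilyFactor (Gdef m) {2, 5} := by
  rintro ⟨F, hFG, hcomp⟩
  let v0 : Fin m := ⟨0, by omega⟩
  let v1 : Fin m := ⟨1, by omega⟩
  let v2 : Fin m := ⟨2, by omega⟩
  set S : Set (Fin m) := {v | (v : ℕ) < 3} with hSdef
  have hSsub : S ⊆ {v0, v1, v2} := by
    intro v hv
    simp only [hSdef, Set.mem_setOf_eq] at hv
    simp only [Set.mem_insert_iff, Set.mem_singleton_iff, Fin.ext_iff, v0, v1, v2, Fin.val_mk]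
    omega
  have hS3 : S.ncard ≤ 3 := by
    refine le_trans (Set.ncard_le_ncard hSsub (Set.toFinite _)) ?_
    refine le_trans (Set.ncard_insert_le _ _) ?_
    refine le_trans (by exact Nat.add_le_add_right (Set.ncard_insert_le _ _) 1) ?_
    simp [Set.ncard_singleton]
  have hstep : ∀ a b : Fin m, F.Adj a b → (a : ℕ) < 3 → (b : ℕ) < 3 := by
    intro a b h ha
    exact Rrel_lt3 (hFG h) ha
  have hsupp : ∀ i : Fin m, (i : ℕ) < 3 → (F.connectedComponentMk i).supp ⊆ S := by
    intro i hi w hw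
    rw [ConnectedComponent.mem_supp_iff] at hw
    have hr : F.Reachable i w := (ConnectedComponent.eq.mp hw).symm
    exact reach_ind hstep hr hi
  have hcard : ∀ i : Fin m, (i : ℕ) < 3 → (F.connectedComponentMk i).supp.ncard = 2 := by
    intro i hi
    obtain ⟨n, hn, hpath⟩ := hcomp (F.connectedComponentMk i)
    have hc : (F.connectedComponentMk i).supp.ncard = n := by
      rw [← supp_ncard_eq]; exact isPathComp_card hpath
    have hle : (F.connectedComponentMk i).supp.ncard ≤ 3 :=
      le_trans (Set.ncard_le_ncard (hsupp i hi) (Set.toFinite _)) hS3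
    simp only [Set.mem_insert_iff, Set.mem_singleton_iff] at hn
    omega
  have hmem : ∀ i : Fin m, i ∈ (F.connectedComponentMk i).supp := by
    intro i; rw [ConnectedComponent.mem_supp_iff]
  have hdisj : ∀ i j : Fin m, F.connectedComponentMk i ≠ F.connectedComponentMk j →
      Disjoint (F.connectedComponentMk i).supp (F.connectedComponentMk j).supp := by
    intro i j hne
    rw [Set.disjoint_left]
    intro x hxi hxj
    rw [ConnectedComponent.mem_supp_iff] at hxi hxj
    exact hne (hxi ▸ hxj)
  have hv01 : v0 ≠ v1 := by simp [v0, v1, Fin.ext_iff]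
  have hv02 : v0 ≠ v2 := by simp [v0, v2, Fin.ext_iff]
  have hv12 : v1 ≠ v2 := by simp [v1, v2, Fin.ext_iff]
  -- case analysis
  have contra2 : ∀ i j : Fin m, (i:ℕ) < 3 → (j:ℕ) < 3 →
      F.connectedComponentMk i ≠ F.connectedComponentMk j → False := by
    intro i j hi hj hne
    have hd := hdisj i j hne
    have hu : ((F.connectedComponentMk i).supp ∪ (F.connectedComponentMk j).supp).ncard = 4 := by
      rw [Set.ncard_union_eq hd (Set.toFinite _) (Set.toFinite _), hcard i hi, hcard j hj]
    have hsub : (F.connectedComponentMk i).supp ∪ (F.connectedComponentMk j).supp ⊆ S :=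
      Set.union_subset (hsupp i hi) (hsupp j hj)
    have := le_trans (le_of_eq hu.symm) (Set.ncard_le_ncard hsub (Set.toFinite _))
    omega
  by_cases h01 : F.connectedComponentMk v0 = F.connectedComponentMk v1
  · by_cases h02 : F.connectedComponentMk v0 = F.connectedComponentMk v2
    · -- all in one component of size 2, but contains three distinct vertices
      have hsub : ({v0, v1, v2} : Set (Fin m)) ⊆ (F.connectedComponentMk v0).supp := by
        intro x hx
        simp only [Set.mem_insert_iff, Set.mem_singleton_iff] at hx
        rcases hx with rfl | rfl | rfl
        · exact hmem v0
        · exact h01 ▸ hmem v1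
        · exact h02 ▸ hmem v2
      have h3 : ({v0, v1, v2} : Set (Fin m)).ncard = 3 := by
        rw [Set.ncard_insert_of_notMem (by simp [hv01, hv02]) (Set.toFinite _),
          Set.ncard_pair hv12]
      have := Set.ncard_le_ncard hsub (Set.toFinite _)
      rw [h3, hcard v0 (by simp [v0])] at this
      omega
    · exact contra2 v0 v2 (by simp [v0]) (by simp [v2]) h02
  · exact contra2 v0 v1 (by simp [v0]) (by simp [v1]) h01

lemma key3 (m : ℕ) (X : Set (Fin m))
    (c : (SimpleGraph.induce Xᶜ (Gdef m)).ConnectedComponent) (hc : Nat.card c.supp = 3) :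
    ∃ w ∈ c.supp, ((w : Fin m) : ℕ) = 0 := by
  rw [supp_ncard_eq] at hc
  obtain ⟨a, b, d, hab, had, hbd, hsupp⟩ := Set.ncard_eq_three.mp hc
  have hvalne : ∀ x y : ↥Xᶜ, x ≠ y → ((x : Fin m) : ℕ) ≠ ((y : Fin m) : ℕ) :=
    fun x y h h' => h (Subtype.ext (Fin.ext h'))
  have hlt : ∀ w ∈ c.supp, ((w : Fin m) : ℕ) < 3 := by
    by_contra h
    push_neg at h
    obtain ⟨u, hu, hu3⟩ := h
    have hreach : ∀ w ∈ c.supp,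
        ((w : Fin m) : ℕ) = ((u : Fin m) : ℕ) ∨ ((w : Fin m) : ℕ) = pfn ((u : Fin m) : ℕ) := by
      intro w hw
      have h1 : (SimpleGraph.induce Xᶜ (Gdef m)).Reachable u w := by
        rw [ConnectedComponent.mem_supp_iff] at hu hw
        exact ConnectedComponent.eq.mp (hu.trans hw.symm)
      exact reach_ind (P := fun x : Fin m => (x : ℕ) = ((u : Fin m) : ℕ) ∨
          (x : ℕ) = pfn ((u : Fin m) : ℕ))
        (fun x y hxy hx => Rrel_step hu3 hx hxy) (reach_up h1) (Or.inl rfl)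
    have ha := hreach a (by rw [hsupp]; simp)
    have hb := hreach b (by rw [hsupp]; simp)
    have hd := hreach d (by rw [hsupp]; simp)
    have h1 := hvalne a b hab
    have h2 := hvalne a d had
    have h3 := hvalne b d hbd
    omega
  have ha := hlt a (by rw [hsupp]; simp)
  have hb := hlt b (by rw [hsupp]; simp)
  have hd := hlt d (by rw [hsupp]; simp)
  have h1 := hvalne a b hab
  have h2 := hvalne a d had
  have h3 := hvalne b d hbd
  have : ((a : Fin m) : ℕ) = 0 ∨ ((b : Fin m) : ℕ) = 0 ∨ ((d : Fin m) : ℕ) = 0 := by omega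
  rcases this with h | h | h
  · exact ⟨a, by rw [hsupp]; simp, h⟩
  · exact ⟨b, by rw [hsupp]; simp, h⟩
  · exact ⟨d, by rw [hsupp]; simp, h⟩

lemma c3_le (m : ℕ) (X : Set (Fin m)) : cCount (SimpleGraph.induce Xᶜ (Gdef m)) 3 ≤ 1 := by
  have hsub : Subsingleton
      {c : (SimpleGraph.induce Xᶜ (Gdef m)).ConnectedComponent // Nat.card c.supp = 3} := by
    constructor
    rintro ⟨c, hc⟩ ⟨c', hc'⟩
    obtain ⟨w, hw, hw0⟩ := key3 m X c hc
    obtain ⟨w', hw', hw0'⟩ := key3 m X c' hc'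
    have hww : w = w' := Subtype.ext (Fin.ext (hw0.trans hw0'.symm))
    subst hww
    rw [ConnectedComponent.mem_supp_iff] at hw hw'
    exact Subtype.ext (hw ▸ hw' ▸ rfl)
  exact Finite.card_le_one_iff_subsingleton.mpr hsub

def tgt {m : ℕ} (hm : m % 2 = 1) (h3m : 3 ≤ m) {X : Set (Fin m)} (v : ↥Xᶜ) : Fin m :=
  if h : 3 ≤ ((v : Fin m) : ℕ) then
    ⟨pfn ((v : Fin m) : ℕ), (pfn_bounds h (v : Fin m).isLt hm).2⟩
  else ⟨if ((v : Fin m) : ℕ) = 0 then 1 else 0, by split_ifs <;> omega⟩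

lemma tgt_mem {m : ℕ} (hm : m % 2 = 1) (h3m : 3 ≤ m) {X : Set (Fin m)} (v : ↥Xᶜ)
    (hiso : ∀ w, ¬ (SimpleGraph.induce Xᶜ (Gdef m)).Adj v w) : tgt hm h3m v ∈ X := by
  by_cases h : 3 ≤ ((v : Fin m) : ℕ)
  · rw [tgt, dif_pos h]
    by_contra hx
    exact hiso ⟨⟨pfn ((v : Fin m) : ℕ), (pfn_bounds h (v : Fin m).isLt hm).2⟩, hx⟩
      (Rrel_pfn h)
  · rw [tgt, dif_neg h]
    by_contra hx
    refine hiso ⟨⟨if ((v : Fin m) : ℕ) = 0 then 1 else 0, by split_ifs <;> omega⟩, hx⟩ ?_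
    show Rrel ((v : Fin m) : ℕ) (if ((v : Fin m) : ℕ) = 0 then 1 else 0)
    unfold Rrel
    split_ifs <;> omega

lemma tgt_inj {m : ℕ} (hm : m % 2 = 1) (h3m : 3 ≤ m) {X : Set (Fin m)} (v v' : ↥Xᶜ)
    (hiso : ∀ w, ¬ (SimpleGraph.induce Xᶜ (Gdef m)).Adj v w)
    (hiso' : ∀ w, ¬ (SimpleGraph.induce Xᶜ (Gdef m)).Adj v' w)
    (heq : tgt hm h3m v = tgt hm h3m v') : v = v' := by
  by_cases h : 3 ≤ ((v : Fin m) : ℕ) <;> by_cases h' : 3 ≤ ((v' : Fin m) : ℕ)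
  · unfold tgt at heq
    rw [dif_pos h, dif_pos h'] at heq
    have := congrArg Fin.val heq
    exact Subtype.ext (Fin.ext (pfn_inj h h' this))
  · exfalso
    unfold tgt at heq
    rw [dif_pos h, dif_neg h'] at heq
    have h2 := congrArg Fin.val heq
    have h1 := (pfn_bounds h (v : Fin m).isLt hm).1
    simp only at h2
    split_ifs at h2 <;> omega
  · exfalso
    unfold tgt at heq
    rw [dif_neg h, dif_pos h'] at heq
    have h2 := congrArg Fin.val heq
    have h1 := (pfn_bounds h' (v' : Fin m).isLt hm).1
    simp only at h2
    split_ifs at h2 <;> omega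
  · by_contra hne
    have hvv : ((v : Fin m) : ℕ) ≠ ((v' : Fin m) : ℕ) :=
      fun e => hne (Subtype.ext (Fin.ext e))
    refine hiso v' ?_
    show Rrel ((v : Fin m) : ℕ) ((v' : Fin m) : ℕ)
    exact Or.inl ⟨by omega, by omega, hvv⟩

lemma c1_le (m : ℕ) (hm : m % 2 = 1) (h3m : 3 ≤ m) (X : Set (Fin m)) :
    cCount (SimpleGraph.induce Xᶜ (Gdef m)) 1 ≤ X.ncard := by
  classical
  have hsingle : ∀ c : {c : (SimpleGraph.induce Xᶜ (Gdef m)).ConnectedComponent //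
      Nat.card c.supp = 1}, ∃ v, c.1.supp = {v} := by
    intro c
    have hc := c.2
    rw [supp_ncard_eq] at hc
    exact Set.ncard_eq_one.mp hc
  choose vf hvf using hsingle
  have hmk : ∀ c, (SimpleGraph.induce Xᶜ (Gdef m)).connectedComponentMk (vf c) = c.1 := by
    intro c
    rw [← ConnectedComponent.mem_supp_iff, hvf c]
    rfl
  have hiso : ∀ c, ∀ w, ¬ (SimpleGraph.induce Xᶜ (Gdef m)).Adj (vf c) w := by
    intro c w hadj
    have hw : w ∈ c.1.supp := by
      rw [ConnectedComponent.mem_supp_iff, ← hmk c]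
      exact ConnectedComponent.sound hadj.symm.reachable
    rw [hvf c] at hw
    exact (SimpleGraph.induce Xᶜ (Gdef m)).loopless.irrefl _ (hw ▸ hadj)
  have hXfin : Finite ↥X := Subtype.finite
  have hinj : Function.Injective
      (fun c => (⟨tgt hm h3m (vf c), tgt_mem hm h3m (vf c) (hiso c)⟩ : ↥X)) := by
    intro c c' h
    have h2 : tgt hm h3m (vf c) = tgt hm h3m (vf c') := congrArg Subtype.val h
    have h3 : vf c = vf c' := tgt_inj hm h3m _ _ (hiso c) (hiso c') h2
    have h4 : c.1.supp = c'.1.supp := by rw [hvf c, hvf c', h3]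
    exact Subtype.ext (ConnectedComponent.supp_injective h4)
  calc cCount (SimpleGraph.induce Xᶜ (Gdef m)) 1
      ≤ Nat.card ↥X := Nat.card_le_card_of_injective _ hinj
    _ = X.ncard := Nat.card_coe_set_eq X

/-- there are infinitely many graphs without a `{P₂, P₅}`-factor
satisfying `c₁(G−X) + (2/3)c₃(G−X) ≤ (4/3)|X| + 2/3` for all `X`. -/
theorem stmt13 :
    ∀ N : ℕ, ∃ m, N ≤ m ∧ ∃ G : SimpleGraph (Fin m),
      ¬ HasPathFamilyFactor G {2, 5} ∧
      ∀ X : Set (Fin m),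
        (cCount (SimpleGraph.induce Xᶜ G) 1 : ℚ) +
            (2 / 3) * cCount (SimpleGraph.induce Xᶜ G) 3 ≤ (4 / 3) * X.ncard + 2 / 3 := by
  intro N
  refine ⟨2 * N + 3, by omega, Gdef (2 * N + 3), no_factor _ (by omega), ?_⟩
  intro X
  have h1 := c1_le (2 * N + 3) (by omega) (by omega) X
  have h3 := c3_le (2 * N + 3) X
  have hc1 : (cCount (SimpleGraph.induce Xᶜ (Gdef (2 * N + 3))) 1 : ℚ) ≤ (X.ncard : ℚ) := by
    exact_mod_cast h1
  have hc3 : (cCount (SimpleGraph.induce Xᶜ (Gdef (2 * N + 3))) 3 : ℚ) ≤ 1 := by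
    exact_mod_cast h3
  have hn : (0 : ℚ) ≤ (X.ncard : ℚ) := by positivity
  linarith
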